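/- For all m ≥ 0 and 0 ≤ ℓ ≤ 2m, the q-binomial identity ∑_{j≥0} (−1)^j q^{j(j−1)/2} qbinom(2m−j, ℓ) qbinom(ℓ, j) = q^{ℓ(2m−ℓ)} holds, where qbinom denotes the Gaussian binomial coefficient (zero when the lower index is negative or exceeds the upper index). -/

import Mathlib

/-- The Gaussian q-binomial coefficient in `ℤ[q]`, via the q-Pascal recurrence;
it vanishes when the lower index exceeds the upper index. -/
noncomputable def qbinom : ℕ → ℕ → Polynomial ℤ
  | _, 0 => 1
  | 0, _ + 1 => 0
  | n + 1, k + 1 => qbinom n k + Polynomial.X ^ (k + 1) * qbinom n (k + 1)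

open Polynomial Finset

lemma qbinom_zero_right (n : ℕ) : qbinom n 0 = 1 := by
  cases n <;> rfl

lemma qbinom_succ_succ (n k : ℕ) :
    qbinom (n + 1) (k + 1) = qbinom n k + X ^ (k + 1) * qbinom n (k + 1) := rfl

lemma qbinom_of_lt : ∀ n k : ℕ, n < k → qbinom n k = 0 := by
  intro n
  induction n with
  | zero =>
    intro k hk
    match k, hk with
    | k + 1, _ => rfl
  | succ n ih =>
    intro k hk
    match k, hk with
    | k + 1, hk =>
      rw [qbinom_succ_succ, ih k (by omega), ih (k + 1) (by omega)]
      ring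

lemma tri (j : ℕ) : (j + 1) * (j + 1 - 1) / 2 = j * (j - 1) / 2 + j :=
  Nat.triangle_succ j

/-- The second Pascal recurrence. -/
lemma qbinom_pascal' : ∀ n k : ℕ,
    qbinom (n + 1) (k + 1) = X ^ (n - k) * qbinom n k + qbinom n (k + 1) := by
  intro n
  induction n with
  | zero =>
    intro k
    cases k with
    | zero => simp [qbinom_succ_succ, qbinom_zero_right, qbinom_of_lt 0 1 (by omega)]
    | succ k =>
      rw [qbinom_succ_succ, qbinom_of_lt 0 (k + 1) (by omega),
        qbinom_of_lt 0 (k + 2) (by omega)]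
      ring
  | succ n ih =>
    intro k
    cases k with
    | zero =>
      conv_lhs => rw [qbinom_succ_succ (n + 1) 0, ih 0]
      conv_rhs => rw [qbinom_succ_succ n 0]
      simp only [qbinom_zero_right, Nat.sub_zero, Nat.add_sub_cancel]
      ring
    | succ k =>
      conv_lhs => rw [qbinom_succ_succ (n + 1) (k + 1), ih k, ih (k + 1)]
      conv_rhs => rw [qbinom_succ_succ n k, qbinom_succ_succ n (k + 1)]
      rw [show n + 1 - (k + 1) = n - k from by omega]
      by_cases hk : k < n
      · rw [show n - k = (n - (k + 1)) + 1 from by omega]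
        ring
      · rw [qbinom_of_lt n (k + 1) (by omega)]
        ring

lemma key : ∀ ℓ N k : ℕ, ℓ ≤ N →
    ∑ j ∈ Finset.range (ℓ + 1),
        (-1 : Polynomial ℤ) ^ j * X ^ (j * (j - 1) / 2) * qbinom (N - j) k * qbinom ℓ j
      = if k < ℓ then 0 else X ^ (ℓ * (N - k)) * qbinom (N - ℓ) (k - ℓ) := by
  intro ℓ
  induction ℓ with
  | zero =>
    intro N k _
    simp [Finset.sum_range_one, qbinom_zero_right]
  | succ ℓ ih =>
    intro N k h
    have hstep :
        (∑ j ∈ Finset.range (ℓ + 1 + 1),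
            (-1 : Polynomial ℤ) ^ j * X ^ (j * (j - 1) / 2) * qbinom (N - j) k
              * qbinom (ℓ + 1) j)
          = ∑ j ∈ Finset.range (ℓ + 1),
              ((-1 : Polynomial ℤ) ^ (j + 1) * X ^ (j * (j - 1) / 2 + j)
                  * qbinom (N - (j + 1)) k
                + (-1 : Polynomial ℤ) ^ j * X ^ (j * (j - 1) / 2 + j)
                  * qbinom (N - j) k) * qbinom ℓ j := by
      rw [Finset.sum_range_succ'
        (fun j => (-1 : Polynomial ℤ) ^ j * X ^ (j * (j - 1) / 2) * qbinom (N - j) k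
          * qbinom (ℓ + 1) j) (ℓ + 1)]
      have t1 : ∀ j ∈ Finset.range (ℓ + 1),
          (-1 : Polynomial ℤ) ^ (j + 1) * X ^ ((j + 1) * (j + 1 - 1) / 2)
              * qbinom (N - (j + 1)) k * qbinom (ℓ + 1) (j + 1)
            = (-1 : Polynomial ℤ) ^ (j + 1) * X ^ (j * (j - 1) / 2 + j)
                * qbinom (N - (j + 1)) k * qbinom ℓ j
              + (-1 : Polynomial ℤ) ^ (j + 1) * X ^ ((j + 1) * (j + 1 - 1) / 2)
                * qbinom (N - (j + 1)) k * X ^ (j + 1) * qbinom ℓ (j + 1) := by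
        intro j _
        rw [qbinom_succ_succ ℓ j, tri j]
        ring
      rw [Finset.sum_congr rfl t1, Finset.sum_add_distrib]
      have e3 :
          (∑ j ∈ Finset.range (ℓ + 1),
              (-1 : Polynomial ℤ) ^ (j + 1) * X ^ ((j + 1) * (j + 1 - 1) / 2)
                * qbinom (N - (j + 1)) k * X ^ (j + 1) * qbinom ℓ (j + 1))
            + (-1 : Polynomial ℤ) ^ 0 * X ^ (0 * (0 - 1) / 2) * qbinom (N - 0) k
                * qbinom (ℓ + 1) 0
          = ∑ j ∈ Finset.range (ℓ + 1 + 1),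
              (-1 : Polynomial ℤ) ^ j * X ^ (j * (j - 1) / 2) * qbinom (N - j) k
                * X ^ j * qbinom ℓ j := by
        rw [Finset.sum_range_succ'
          (fun j => (-1 : Polynomial ℤ) ^ j * X ^ (j * (j - 1) / 2) * qbinom (N - j) k
            * X ^ j * qbinom ℓ j) (ℓ + 1)]
        simp [qbinom_zero_right]
      rw [add_assoc, e3, Finset.sum_range_succ
        (fun j => (-1 : Polynomial ℤ) ^ j * X ^ (j * (j - 1) / 2) * qbinom (N - j) k
          * X ^ j * qbinom ℓ j) (ℓ + 1), qbinom_of_lt ℓ (ℓ + 1) (by omega)]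
      rw [mul_zero, add_zero, ← Finset.sum_add_distrib]
      refine Finset.sum_congr rfl fun j _ => ?_
      ring
    rw [hstep]
    cases k with
    | zero =>
      have hz : ∀ j ∈ Finset.range (ℓ + 1),
          ((-1 : Polynomial ℤ) ^ (j + 1) * X ^ (j * (j - 1) / 2 + j)
              * qbinom (N - (j + 1)) 0
            + (-1 : Polynomial ℤ) ^ j * X ^ (j * (j - 1) / 2 + j)
              * qbinom (N - j) 0) * qbinom ℓ j = 0 := by
        intro j _
        rw [qbinom_zero_right, qbinom_zero_right]
        ring
      rw [Finset.sum_congr rfl hz, Finset.sum_const_zero, if_pos (by omega)]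
    | succ k' =>
      have hterm : ∀ j ∈ Finset.range (ℓ + 1),
          ((-1 : Polynomial ℤ) ^ (j + 1) * X ^ (j * (j - 1) / 2 + j)
              * qbinom (N - (j + 1)) (k' + 1)
            + (-1 : Polynomial ℤ) ^ j * X ^ (j * (j - 1) / 2 + j)
              * qbinom (N - j) (k' + 1)) * qbinom ℓ j
          = X ^ (N - 1 - k') *
              ((-1 : Polynomial ℤ) ^ j * X ^ (j * (j - 1) / 2) * qbinom (N - 1 - j) k'
                * qbinom ℓ j) := by
        intro j hj
        have hjl : j ≤ ℓ := by simpa [Nat.lt_succ_iff] using hj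
        rw [show N - (j + 1) = N - 1 - j from by omega,
          show N - j = (N - 1 - j) + 1 from by omega,
          qbinom_pascal' (N - 1 - j) k']
        by_cases hk' : k' ≤ N - 1 - j
        · rw [show N - 1 - k' = j + (N - 1 - j - k') from by omega, pow_add]
          ring
        · rw [qbinom_of_lt (N - 1 - j) k' (by omega)]
          ring
      rw [Finset.sum_congr rfl hterm, ← Finset.mul_sum, ih (N - 1) k' (by omega)]
      by_cases hkl : k' < ℓ
      · rw [if_pos hkl, if_pos (by omega), mul_zero]
      · rw [if_neg hkl, if_neg (by omega),
          show N - (ℓ + 1) = N - 1 - ℓ from by omega,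
          show k' + 1 - (ℓ + 1) = k' - ℓ from by omega,
          show N - (k' + 1) = N - 1 - k' from by omega,
          Nat.succ_mul, pow_add]
        ring

theorem stmt19 (m ℓ : ℕ) (h : ℓ ≤ 2 * m) :
    ∑ j ∈ Finset.range (ℓ + 1),
        (-1 : Polynomial ℤ) ^ j * Polynomial.X ^ (j * (j - 1) / 2) *
          qbinom (2 * m - j) ℓ * qbinom ℓ j
      = Polynomial.X ^ (ℓ * (2 * m - ℓ)) := by
  have := key ℓ (2 * m) ℓ h
  rw [if_neg (lt_irrefl ℓ), Nat.sub_self, qbinom_zero_right, mul_one] at this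
  exact this
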